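/- Let d ≥ 2 be a real number and suppose that for every P5-free graph G with χ(G) ≥ 2^d, G contains either (a) a complete pair (X,Y) with χ(X) ≥ y^d·χ(G) and χ(Y) ≥ (1−y)·χ(G) for some y ∈ (0,1), or (b) a complete blockade (B_1,…,B_k) with k ≥ 2 and χ(B_i) ≥ k^{−d}·χ(G) for all i ∈ [k]. Then every P5-free graph G satisfies χ(G) ≤ ω(G)^d. -/

import Mathlib

open SimpleGraph

/-- The chromatic number of the subgraph of `G` induced on `S`, as a natural number. -/
noncomputable def chiS {V : Type*} [Fintype V] (G : SimpleGraph V) (S : Set V) : ℕ :=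
  (G.induce S).chromaticNumber.toNat

/-- A graph is `P5`-free if it has no induced subgraph isomorphic to the five-vertex path. -/
def P5Free {V : Type*} (G : SimpleGraph V) : Prop :=
  IsEmpty (SimpleGraph.pathGraph 5 ↪g G)

/-- The clique number of a graph. -/
noncomputable def omegaNum {V : Type*} (G : SimpleGraph V) : ℕ :=
  sSup {n | ∃ t : Finset V, G.IsNClique n t}

lemma omega_bdd {V : Type*} [Finite V] (G : SimpleGraph V) :
    BddAbove {n | ∃ t : Finset V, G.IsNClique n t} := by
  cases nonempty_fintype V
  refine ⟨Fintype.card V, ?_⟩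
  rintro n ⟨t, ht⟩
  rw [← ht.card_eq]
  exact t.card_le_univ.trans_eq Finset.card_univ

lemma le_omega {V : Type*} [Finite V] (G : SimpleGraph V) {n : ℕ} {t : Finset V}
    (h : G.IsNClique n t) : n ≤ omegaNum G :=
  le_csSup (omega_bdd G) ⟨t, h⟩

lemma omega_spec {V : Type*} [Finite V] (G : SimpleGraph V) :
    ∃ t : Finset V, G.IsNClique (omegaNum G) t := by
  have hne : {n : ℕ | ∃ t : Finset V, G.IsNClique n t}.Nonempty := ⟨0, ⟨∅, by simp⟩⟩
  exact Nat.sSup_mem hne (omega_bdd G)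

lemma one_le_omega {V : Type*} [Finite V] [Nonempty V] (G : SimpleGraph V) :
    1 ≤ omegaNum G :=
  le_omega G (t := {Classical.arbitrary V}) (isNClique_singleton.mpr rfl)

lemma two_le_omega {V : Type*} [Finite V] (G : SimpleGraph V) {u v : V} (h : G.Adj u v) :
    2 ≤ omegaNum G := by
  classical
  refine le_omega G (t := insert u {v}) ?_
  have h1 : G.IsNClique 1 {v} := isNClique_singleton.mpr rfl
  exact h1.insert (by simpa using h)

lemma p5free_induce {V : Type*} {G : SimpleGraph V} (h : P5Free G) (S : Set V) :
    P5Free (G.induce S) :=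
  ⟨fun e => h.false ((Embedding.induce S).comp e)⟩

lemma chiS_induce {V : Type*} [Fintype V] (G : SimpleGraph V) (S : Set V) [Fintype S] :
    chiS (G.induce S) Set.univ = chiS G S := by
  unfold chiS
  congr 1
  exact le_antisymm
    (chromaticNumber_mono_of_hom (induceUnivIso (G.induce S)).toEmbedding.toHom)
    (chromaticNumber_mono_of_hom (induceUnivIso (G.induce S)).symm.toEmbedding.toHom)

lemma nonempty_of_chiS_pos {V : Type*} [Fintype V] (G : SimpleGraph V) {S : Set V}
    (h : 0 < chiS G S) : S.Nonempty := by
  by_contra hne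
  rw [Set.not_nonempty_iff_eq_empty] at hne
  haveI : IsEmpty ↥S := Set.isEmpty_coe_sort.mpr hne
  rw [chiS, chromaticNumber_eq_zero_of_isEmpty] at h
  simp at h

lemma chiS_le_one {V : Type*} [Fintype V] (G : SimpleGraph V)
    (h : ∀ u v : V, ¬ G.Adj u v) : chiS G Set.univ ≤ 1 := by
  have hc : (G.induce Set.univ).Colorable 1 := by
    refine ⟨Coloring.mk (fun _ => 0) ?_⟩
    intro a b hab
    exact absurd hab (h a b)
  have := hc.chromaticNumber_le
  have := ENat.toNat_le_toNat this (by simp)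
  simpa [chiS] using this

lemma pair_omega_le {V : Type*} [Finite V] (G : SimpleGraph V) {X Y : Set V}
    (hXY : Disjoint X Y) (hcomp : ∀ x ∈ X, ∀ z ∈ Y, G.Adj x z) :
    omegaNum (G.induce X) + omegaNum (G.induce Y) ≤ omegaNum G := by
  classical
  obtain ⟨t1, ht1⟩ := omega_spec (G.induce X)
  obtain ⟨t2, ht2⟩ := omega_spec (G.induce Y)
  set f1 : Finset V := t1.map (Function.Embedding.subtype _) with hf1
  set f2 : Finset V := t2.map (Function.Embedding.subtype _) with hf2
  have hm1 : ∀ a ∈ f1, a ∈ X := by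
    intro a ha
    simp only [hf1, Finset.mem_map, Function.Embedding.coe_subtype] at ha
    obtain ⟨x, _, rfl⟩ := ha; exact x.2
  have hm2 : ∀ a ∈ f2, a ∈ Y := by
    intro a ha
    simp only [hf2, Finset.mem_map, Function.Embedding.coe_subtype] at ha
    obtain ⟨x, _, rfl⟩ := ha; exact x.2
  have hdisj : Disjoint f1 f2 := by
    rw [Finset.disjoint_left]
    intro a ha1 ha2
    exact hXY.le_bot ⟨hm1 a ha1, hm2 a ha2⟩
  refine le_omega G (t := f1 ∪ f2) ⟨?_, ?_⟩
  · intro a ha b hb hab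
    rw [Finset.coe_union, Set.mem_union] at ha hb
    have key1 : ∀ (t : Finset ↥X), (G.induce X).IsClique ↑t →
        ∀ a b : V, a ∈ t.map (Function.Embedding.subtype _) →
          b ∈ t.map (Function.Embedding.subtype _) → a ≠ b → G.Adj a b := by
      intro t hcl a b ha hb hab
      simp only [Finset.mem_map, Function.Embedding.coe_subtype] at ha hb
      obtain ⟨xa, hxa, rfl⟩ := ha
      obtain ⟨xb, hxb, rfl⟩ := hb
      exact hcl (Finset.mem_coe.mpr hxa) (Finset.mem_coe.mpr hxb)
        (fun h => hab (congrArg _ h))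
    have key2 : ∀ (t : Finset ↥Y), (G.induce Y).IsClique ↑t →
        ∀ a b : V, a ∈ t.map (Function.Embedding.subtype _) →
          b ∈ t.map (Function.Embedding.subtype _) → a ≠ b → G.Adj a b := by
      intro t hcl a b ha hb hab
      simp only [Finset.mem_map, Function.Embedding.coe_subtype] at ha hb
      obtain ⟨xa, hxa, rfl⟩ := ha
      obtain ⟨xb, hxb, rfl⟩ := hb
      exact hcl (Finset.mem_coe.mpr hxa) (Finset.mem_coe.mpr hxb)
        (fun h => hab (congrArg _ h))
    rcases ha with ha | ha <;> rcases hb with hb | hb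
    · exact key1 t1 ht1.isClique a b ha hb hab
    · exact hcomp a (hm1 a ha) b (hm2 b hb)
    · exact (hcomp b (hm1 b hb) a (hm2 a ha)).symm
    · exact key2 t2 ht2.isClique a b ha hb hab
  · rw [Finset.card_union_of_disjoint hdisj, Finset.card_map, Finset.card_map,
      ht1.card_eq, ht2.card_eq]

lemma sum_omega_le {V : Type*} [Finite V] (G : SimpleGraph V) {k : ℕ} (B : Fin k → Set V)
    (hdisj : ∀ i j, i ≠ j → Disjoint (B i) (B j))
    (hcomp : ∀ i j, i ≠ j → ∀ a ∈ B i, ∀ b ∈ B j, G.Adj a b) :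
    ∑ i, omegaNum (G.induce (B i)) ≤ omegaNum G := by
  classical
  have hspec := fun i => omega_spec (G.induce (B i))
  choose t ht using hspec
  set f : Fin k → Finset V := fun i => (t i).map (Function.Embedding.subtype _) with hf
  have hmem : ∀ i a, a ∈ f i → a ∈ B i := by
    intro i a ha
    simp only [hf, Finset.mem_map, Function.Embedding.coe_subtype] at ha
    obtain ⟨x, _, rfl⟩ := ha; exact x.2
  have hfd : ∀ i ∈ Finset.univ, ∀ j ∈ Finset.univ, i ≠ j → Disjoint (f i) (f j) := by
    intro i _ j _ hij
    rw [Finset.disjoint_left]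
    intro a hai haj
    exact (hdisj i j hij).le_bot ⟨hmem i a hai, hmem j a haj⟩
  refine le_omega G (t := Finset.univ.biUnion f) ⟨?_, ?_⟩
  · intro a ha b hb hab
    rw [Finset.coe_biUnion] at ha hb
    simp only [Set.mem_iUnion, Finset.mem_coe] at ha hb
    obtain ⟨i, -, hai⟩ := ha
    obtain ⟨j, -, hbj⟩ := hb
    by_cases hij : i = j
    · subst hij
      simp only [hf, Finset.mem_map, Function.Embedding.coe_subtype] at hai hbj
      obtain ⟨xa, hxa, rfl⟩ := hai
      obtain ⟨xb, hxb, rfl⟩ := hbj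
      exact (ht i).isClique (Finset.mem_coe.mpr hxa) (Finset.mem_coe.mpr hxb)
        (fun h => hab (congrArg _ h))
    · exact hcomp i j hij a (hmem i a hai) b (hmem j b hbj)
  · rw [Finset.card_biUnion hfd]
    refine Finset.sum_congr rfl fun i _ => ?_
    rw [hf]
    simp [Finset.card_map, (ht i).card_eq]

theorem stmt_4.{u} (d : ℝ) (hd : 2 ≤ d)
    (hyp : ∀ (W : Type u) [Fintype W] (H : SimpleGraph W), P5Free H →
      (2 : ℝ) ^ d ≤ (chiS H Set.univ : ℝ) →
      (∃ X Y : Set W, X.Nonempty ∧ Y.Nonempty ∧ Disjoint X Y ∧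
        (∀ x ∈ X, ∀ z ∈ Y, H.Adj x z) ∧
        ∃ y : ℝ, 0 < y ∧ y < 1 ∧
          y ^ d * (chiS H Set.univ : ℝ) ≤ (chiS H X : ℝ) ∧
          (1 - y) * (chiS H Set.univ : ℝ) ≤ (chiS H Y : ℝ)) ∨
      (∃ k : ℕ, 2 ≤ k ∧ ∃ B : Fin k → Set W,
        (∀ i j, i ≠ j → Disjoint (B i) (B j)) ∧
        (∀ i j, i ≠ j → ∀ a ∈ B i, ∀ b ∈ B j, H.Adj a b) ∧
        ∀ i, (k : ℝ) ^ (-d) * (chiS H Set.univ : ℝ) ≤ (chiS H (B i) : ℝ))) :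
    ∀ (V : Type u) [Fintype V] (G : SimpleGraph V), P5Free G →
      (chiS G Set.univ : ℝ) ≤ (omegaNum G : ℝ) ^ d := by
  have hd0 : (0:ℝ) ≤ d := le_trans (by norm_num) hd
  have hd1 : (1:ℝ) ≤ d := le_trans (by norm_num) hd
  have main : ∀ n : ℕ, ∀ (V : Type u) [Fintype V] (G : SimpleGraph V), P5Free G →
      omegaNum G ≤ n → (chiS G Set.univ : ℝ) ≤ (omegaNum G : ℝ) ^ d := by
    intro n
    induction n using Nat.strong_induction_on with
    | _ n IH =>
    intro V _ G hG hωn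
    by_contra hlt
    push_neg at hlt
    set ω := omegaNum G with hωdef
    set χ := chiS G Set.univ with hχdef
    have hω0 : (0:ℝ) ≤ (ω:ℝ) := Nat.cast_nonneg ω
    have hχpos : 0 < χ := by
      rcases Nat.eq_zero_or_pos χ with h | h
      · rw [h] at hlt
        exact absurd hlt (not_lt.mpr (by simpa using Real.rpow_nonneg hω0 d))
      · exact h
    have hVne : Nonempty V := by
      obtain ⟨v, -⟩ := nonempty_of_chiS_pos G hχpos
      exact ⟨v⟩
    have hω1 : 1 ≤ ω := one_le_omega G
    have hedge : ∃ u v, G.Adj u v := by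
      by_contra h
      push_neg at h
      have h1 : χ ≤ 1 := chiS_le_one G h
      have h2 : (1:ℝ) ≤ (ω:ℝ)^d := by
        calc (1:ℝ) = (1:ℝ)^d := (Real.one_rpow d).symm
        _ ≤ (ω:ℝ)^d := Real.rpow_le_rpow (by norm_num) (by exact_mod_cast hω1) hd0
      have : (χ:ℝ) ≤ 1 := by exact_mod_cast h1
      linarith
    obtain ⟨u, v, huv⟩ := hedge
    have hω2 : 2 ≤ ω := two_le_omega G huv
    have h2d : (2:ℝ)^d ≤ (χ:ℝ) := by
      have : (2:ℝ)^d ≤ (ω:ℝ)^d :=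
        Real.rpow_le_rpow (by norm_num) (by exact_mod_cast hω2) hd0
      linarith
    rcases hyp V G hG h2d with
      ⟨X, Y, hXne, hYne, hXY, hcomp, y, hy0, hy1, hX, hY⟩ |
      ⟨k, hk, B, hBdisj, hBcomp, hB⟩
    · -- case (a)
      haveI : Fintype ↥X := (Set.toFinite X).fintype
      haveI : Fintype ↥Y := (Set.toFinite Y).fintype
      set a := omegaNum (G.induce X) with hadef
      set b := omegaNum (G.induce Y) with hbdef
      have hab : a + b ≤ ω := pair_omega_le G hXY hcomp
      haveI : Nonempty ↥X := hXne.to_subtype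
      haveI : Nonempty ↥Y := hYne.to_subtype
      have ha1 : 1 ≤ a := one_le_omega _
      have hb1 : 1 ≤ b := one_le_omega _
      have haltn : a < n := by omega
      have hbltn : b < n := by omega
      have hχX : (chiS G X : ℝ) ≤ (a:ℝ)^d := by
        have := IH a haltn ↥X (G.induce X) (p5free_induce hG X) le_rfl
        rwa [chiS_induce G X] at this
      have hχY : (chiS G Y : ℝ) ≤ (b:ℝ)^d := by
        have := IH b hbltn ↥Y (G.induce Y) (p5free_induce hG Y) le_rfl
        rwa [chiS_induce G Y] at this
      have habR : (a:ℝ) + (b:ℝ) ≤ (ω:ℝ) := by exact_mod_cast hab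
      by_cases hcase : (a:ℝ) ≤ y * ω
      · have h1 : (a:ℝ)^d ≤ (y*ω)^d :=
          Real.rpow_le_rpow (Nat.cast_nonneg a) hcase hd0
        rw [Real.mul_rpow hy0.le hω0] at h1
        have h2 : y^d * (χ:ℝ) ≤ y^d * (ω:ℝ)^d := le_trans hX (le_trans hχX h1)
        have h3 : (χ:ℝ) ≤ (ω:ℝ)^d :=
          le_of_mul_le_mul_left h2 (Real.rpow_pos_of_pos hy0 d)
        linarith
      · push_neg at hcase
        have hb' : (b:ℝ) ≤ (1-y) * ω := by nlinarith
        have h1y0 : (0:ℝ) < 1 - y := by linarith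
        have h1 : (b:ℝ)^d ≤ ((1-y)*ω)^d :=
          Real.rpow_le_rpow (Nat.cast_nonneg b) hb' hd0
        rw [Real.mul_rpow h1y0.le hω0] at h1
        have h2 : (1-y)^d ≤ (1-y) := by
          have := Real.rpow_le_rpow_of_exponent_ge h1y0 (by linarith) hd1
          rwa [Real.rpow_one] at this
        have h3 : ((1-y):ℝ)^d * (ω:ℝ)^d ≤ (1-y) * (ω:ℝ)^d :=
          mul_le_mul_of_nonneg_right h2 (Real.rpow_nonneg hω0 d)
        have h4 : (1-y) * (χ:ℝ) ≤ (1-y) * (ω:ℝ)^d :=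
          le_trans hY (le_trans hχY (le_trans h1 h3))
        have h5 : (χ:ℝ) ≤ (ω:ℝ)^d := le_of_mul_le_mul_left h4 h1y0
        linarith
    · -- case (b)
      have hkpos : 0 < k := by omega
      have hkR : (0:ℝ) < (k:ℝ) := by exact_mod_cast hkpos
      have hkd : (0:ℝ) < (k:ℝ)^(-d) := Real.rpow_pos_of_pos hkR _
      have hBne : ∀ i, (B i).Nonempty := by
        intro i
        apply nonempty_of_chiS_pos G
        have h1 : (0:ℝ) < (k:ℝ)^(-d) * (χ:ℝ) :=
          mul_pos hkd (by exact_mod_cast hχpos)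
        have h2 : (0:ℝ) < (chiS G (B i) : ℝ) := lt_of_lt_of_le h1 (hB i)
        exact_mod_cast h2
      haveI : ∀ i, Fintype ↥(B i) := fun i => (Set.toFinite (B i)).fintype
      set c : Fin k → ℕ := fun i => omegaNum (G.induce (B i)) with hcdef
      have hc1 : ∀ i, 1 ≤ c i := by
        intro i
        haveI : Nonempty ↥(B i) := (hBne i).to_subtype
        exact one_le_omega _
      have hsum : ∑ i, c i ≤ ω := sum_omega_le G B hBdisj hBcomp
      obtain ⟨i, -, hi⟩ := Finset.exists_min_image Finset.univ c
        ⟨⟨0, hkpos⟩, Finset.mem_univ _⟩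
      have hkc : k * c i ≤ ω := by
        calc k * c i = ∑ _j : Fin k, c i := by
              simp [Finset.sum_const, Finset.card_univ, mul_comm]
        _ ≤ ∑ j, c j := Finset.sum_le_sum fun j _ => hi j (Finset.mem_univ j)
        _ ≤ ω := hsum
      -- c i < n
      obtain ⟨j, hij⟩ : ∃ j : Fin k, j ≠ i := by
        haveI : Nontrivial (Fin k) := Fin.nontrivial_iff_two_le.mpr hk
        exact exists_ne i
      have hpair : c i + c j ≤ ∑ l, c l := by
        have hsub : ({i, j} : Finset (Fin k)) ⊆ Finset.univ := Finset.subset_univ _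
        have := Finset.sum_le_sum_of_subset hsub (f := c)
        rwa [Finset.sum_pair (Ne.symm hij)] at this
      have hciltn : c i < n := by
        have := hc1 j
        omega
      have hχB : (chiS G (B i) : ℝ) ≤ (c i:ℝ)^d := by
        have := IH (c i) hciltn ↥(B i) (G.induce (B i)) (p5free_induce hG (B i)) le_rfl
        rwa [chiS_induce G (B i)] at this
      have hcR : (c i : ℝ) ≤ (ω:ℝ) / k := by
        rw [le_div_iff₀ hkR]
        have : ((k * c i : ℕ):ℝ) ≤ ((ω:ℕ):ℝ) := by exact_mod_cast hkc
        push_cast at this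
        linarith
      have h1 : ((c i:ℕ):ℝ)^d ≤ ((ω:ℝ)/k)^d :=
        Real.rpow_le_rpow (Nat.cast_nonneg _) hcR hd0
      have h2 : ((ω:ℝ)/k)^d = (k:ℝ)^(-d) * (ω:ℝ)^d := by
        rw [Real.div_rpow hω0 hkR.le, Real.rpow_neg hkR.le]
        ring
      have h3 : (k:ℝ)^(-d) * (χ:ℝ) ≤ (k:ℝ)^(-d) * (ω:ℝ)^d := by
        calc (k:ℝ)^(-d) * (χ:ℝ) ≤ (chiS G (B i) : ℝ) := hB i
        _ ≤ (c i:ℝ)^d := hχB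
        _ ≤ ((ω:ℝ)/k)^d := h1
        _ = (k:ℝ)^(-d) * (ω:ℝ)^d := h2
      have h4 : (χ:ℝ) ≤ (ω:ℝ)^d := le_of_mul_le_mul_left h3 hkd
      linarith
  intro V _ G hG
  exact main (omegaNum G) V G hG le_rfl
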